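/- Let T > 0, S₀, Δ, a₂, b₁ ∈ ℝ, a₁ > 0, Υ ≥ 0, and let ν : [0,T] → ℝ be a continuous nonnegative function with ∫₀^T ν(t) dt = Υ. Define S(t) = S₀ − b₁ ∫₀^t ν(s) ds. Then ∫₀^T (S(t) − Δ/2 − a₁ν(t) − a₂) ν(t) dt ≤ Υ(S₀ − Δ/2 − a₂) − (b₁/2 + a₁/T)Υ², with equality if and only if ν(t) = Υ/T for all t ∈ [0,T]. In particular, the right-hand side equals H(0,S₀,Υ) where H(t,S,q) = q(S − Δ/2 − a₂) − (b₁/2 + a₁/(T−t))q², so the constant-rate strategy ν ≡ Υ/T achieves the value function. -/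

import Mathlib

open MeasureTheory intervalIntegral Set

/-- Optimality of the constant-rate strategy: for any continuous nonnegative rate
`ν` with `∫₀^T ν = Υ`, the revenue with linear permanent impact `b₁` and linear
temporary impact slope `a₁ > 0` is at most `Υ(S₀ − Δ/2 − a₂) − (b₁/2 + a₁/T)Υ²`,
with equality iff `ν ≡ Υ/T` on `[0,T]`; moreover this bound equals `H(0,S₀,Υ)`
for the value function `H(t,S,q) = q(S − Δ/2 − a₂) − (b₁/2 + a₁/(T−t))q²`. -/
theorem stmt_15 (T S₀ Δ a₂ b₁ a₁ Υ : ℝ) (hT : 0 < T) (ha₁ : 0 < a₁) (hΥ : 0 ≤ Υ)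
    (ν : ℝ → ℝ) (hν : ContinuousOn ν (Set.Icc 0 T))
    (hpos : ∀ t ∈ Set.Icc (0 : ℝ) T, 0 ≤ ν t)
    (htotal : ∫ t in (0 : ℝ)..T, ν t = Υ) :
    (∫ t in (0 : ℝ)..T,
        ((S₀ - b₁ * ∫ s in (0 : ℝ)..t, ν s) - Δ / 2 - a₁ * ν t - a₂) * ν t
      ≤ Υ * (S₀ - Δ / 2 - a₂) - (b₁ / 2 + a₁ / T) * Υ ^ 2)
    ∧ ((∫ t in (0 : ℝ)..T,
          ((S₀ - b₁ * ∫ s in (0 : ℝ)..t, ν s) - Δ / 2 - a₁ * ν t - a₂) * ν t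
        = Υ * (S₀ - Δ / 2 - a₂) - (b₁ / 2 + a₁ / T) * Υ ^ 2)
        ↔ ∀ t ∈ Set.Icc (0 : ℝ) T, ν t = Υ / T)
    ∧ Υ * (S₀ - Δ / 2 - a₂) - (b₁ / 2 + a₁ / T) * Υ ^ 2
        = (fun (t S q : ℝ) => q * (S - Δ / 2 - a₂) - (b₁ / 2 + a₁ / (T - t)) * q ^ 2)
            0 S₀ Υ := by
  have hT' : (0:ℝ) ≤ T := hT.le
  have hTne : T ≠ 0 := hT.ne'
  have huIcc : Set.uIcc (0:ℝ) T = Set.Icc 0 T := Set.uIcc_of_le hT'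
  have hνint : IntervalIntegrable ν volume 0 T := by
    apply ContinuousOn.intervalIntegrable; rwa [huIcc]
  set F : ℝ → ℝ := fun t => ∫ s in (0:ℝ)..t, ν s with hFdef
  have hFcont : ContinuousOn F (Set.Icc 0 T) := by
    have hint : IntegrableOn ν (Set.uIcc 0 T) volume := by
      rw [huIcc]; exact hν.integrableOn_Icc
    have := continuousOn_primitive_interval (μ := volume) hint
    rwa [huIcc] at this
  -- derivative of F at interior points
  have hderivF : ∀ x ∈ Set.Ioo (0:ℝ) T, HasDerivAt F (ν x) x := by
    intro x hx
    have hmem : Set.Icc (0:ℝ) T ∈ nhds x := Icc_mem_nhds hx.1 hx.2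
    have hca : ContinuousAt ν x := hν.continuousAt hmem
    exact integral_hasDerivAt_right
      (hνint.mono_set (by rw [huIcc, Set.uIcc_of_le hx.1.le]; exact Set.Icc_subset_Icc le_rfl hx.2.le))
      ((hν.mono Set.Ioo_subset_Icc_self).stronglyMeasurableAtFilter isOpen_Ioo x hx) hca
  have hFν_int : IntervalIntegrable (fun t => F t * ν t) volume 0 T := by
    apply ContinuousOn.intervalIntegrable; rw [huIcc]; exact hFcont.mul hν
  have hF0 : F 0 = 0 := integral_same
  have hFT : F T = Υ := htotal
  -- ∫ F ν = Υ²/2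
  have key1 : (∫ t in (0:ℝ)..T, F t * ν t) = Υ ^ 2 / 2 := by
    have h := integral_eq_sub_of_hasDeriv_right_of_le hT'
      (f := fun t => F t ^ 2 / 2) (f' := fun t => F t * ν t)
      (((hFcont.pow 2).div_const 2))
      (fun x hx => by
        have := ((hderivF x hx).mul (hderivF x hx)).div_const 2
        have h2 : HasDerivAt (fun t => F t * F t / 2) (F x * ν x) x := by
          exact this.congr_deriv (by ring)
        have h3 : (fun t => F t ^ 2 / 2) = fun t => F t * F t / 2 := by
          funext t; ring
        rw [h3]
        exact h2.hasDerivWithinAt)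
      hFν_int
    rw [h]; simp only [hFT, hF0]; ring
  have hν2int : IntervalIntegrable (fun t => ν t ^ 2) volume 0 T := by
    apply ContinuousOn.intervalIntegrable; rw [huIcc]; exact hν.pow 2
  set J : ℝ := ∫ t in (0:ℝ)..T, ν t ^ 2 with hJdef
  -- rewrite the revenue integral
  have key2 : (∫ t in (0:ℝ)..T, ((S₀ - b₁ * F t) - Δ / 2 - a₁ * ν t - a₂) * ν t)
      = (S₀ - Δ / 2 - a₂) * Υ - b₁ * (Υ ^ 2 / 2) - a₁ * J := by
    have heq : ∀ t, ((S₀ - b₁ * F t) - Δ / 2 - a₁ * ν t - a₂) * ν t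
        = (S₀ - Δ / 2 - a₂) * ν t - b₁ * (F t * ν t) - a₁ * ν t ^ 2 := fun t => by ring
    simp_rw [heq]
    rw [integral_sub (((hνint.const_mul _).sub (hFν_int.const_mul _))) (hν2int.const_mul _),
      integral_sub (hνint.const_mul _) (hFν_int.const_mul _),
      intervalIntegral.integral_const_mul, intervalIntegral.integral_const_mul, intervalIntegral.integral_const_mul, htotal, key1]
  -- quadratic deviation
  have key3 : (∫ t in (0:ℝ)..T, (ν t - Υ / T) ^ 2) = J - Υ ^ 2 / T := by
    have heq : ∀ t, (ν t - Υ / T) ^ 2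
        = ν t ^ 2 - (2 * Υ / T) * ν t + (Υ / T) ^ 2 := fun t => by ring
    simp_rw [heq]
    rw [integral_add ((hν2int.sub (hνint.const_mul _))) intervalIntegrable_const,
      integral_sub hν2int (hνint.const_mul _),
      intervalIntegral.integral_const_mul, htotal, intervalIntegral.integral_const]
    simp only [smul_eq_mul]
    field_simp
    ring
  have hQnonneg : 0 ≤ ∫ t in (0:ℝ)..T, (ν t - Υ / T) ^ 2 :=
    integral_nonneg hT' (fun t _ => sq_nonneg _)
  have hJge : Υ ^ 2 / T ≤ J := by linarith [key3 ▸ hQnonneg]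
  have hsplit : Υ * (S₀ - Δ / 2 - a₂) - (b₁ / 2 + a₁ / T) * Υ ^ 2
      = (S₀ - Δ / 2 - a₂) * Υ - b₁ * (Υ ^ 2 / 2) - a₁ * (Υ ^ 2 / T) := by
    field_simp; ring
  refine ⟨?_, ?_, by norm_num⟩
  · rw [key2, hsplit]
    have := mul_le_mul_of_nonneg_left hJge ha₁.le
    linarith
  · rw [key2, hsplit]
    constructor
    · intro h
      have hJeq : J = Υ ^ 2 / T := by
        have := mul_le_mul_of_nonneg_left hJge ha₁.le
        nlinarith
      have hQ0 : (∫ t in (0:ℝ)..T, (ν t - Υ / T) ^ 2) = 0 := by rw [key3, hJeq]; ring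
      have hQint : IntervalIntegrable (fun t => (ν t - Υ / T) ^ 2) volume 0 T := by
        apply ContinuousOn.intervalIntegrable; rw [huIcc]
        exact (hν.sub continuousOn_const).pow 2
      have hae : (fun t => (ν t - Υ / T) ^ 2) =ᵐ[volume.restrict (Set.Ioc 0 T)] 0 :=
        (integral_eq_zero_iff_of_le_of_nonneg_ae hT'
          (Filter.Eventually.of_forall (fun t => sq_nonneg _)) hQint).mp hQ0
      have haeIcc : (fun t => (ν t - Υ / T) ^ 2) =ᵐ[volume.restrict (Set.Icc 0 T)] 0 := by
        rwa [← Measure.restrict_congr_set Ioc_ae_eq_Icc]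
      have hEqOn : Set.EqOn (fun t => (ν t - Υ / T) ^ 2) 0 (Set.Icc 0 T) :=
        Measure.eqOn_Icc_of_ae_eq volume hT.ne haeIcc
          ((hν.sub continuousOn_const).pow 2) continuousOn_const
      intro t ht
      have := hEqOn ht
      simp only [Pi.zero_apply] at this
      have := pow_eq_zero_iff (n := 2) (by norm_num) |>.mp this
      linarith [this]
    · intro h
      have hQ0 : (∫ t in (0:ℝ)..T, (ν t - Υ / T) ^ 2) = 0 := by
        rw [integral_congr (g := fun _ => (0:ℝ)) (by
          intro t ht
          rw [huIcc] at ht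
          simp [h t ht])]
        simp
      have hJeq : J = Υ ^ 2 / T := by linarith [key3 ▸ hQ0]
      rw [hJeq]
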